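/- Let X be a topological space and let A be a subalgebra of the algebra of bounded continuous real-valued functions on X which contains the constant functions, separates the points of X, and separates points from closed sets. Let I : A → ℝ be a linear functional with I(1) = 1, |I(f)| ≤ sup_{x ∈ X} |f(x)| for all f ∈ A, and I(f) ≥ 0 whenever f ≥ 0. Then there exist a compactification (X̊, ι) of X, such that every f ∈ A has a unique continuous extension f̊ : X̊ → ℝ with f̊ ∘ ι = f, and a unique regular Borel probability measure μ̊ on X̊ such that ∫_{X̊} f̊ dμ̊ = I(f) for every f ∈ A. -/

import Mathlib

open MeasureTheory

set_option synthInstance.maxHeartbeats 1000000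
set_option maxHeartbeats 1000000

open Topology Set BoundedContinuousFunction

universe u

namespace Stmt3Aux

variable {K : Type*} [TopologicalSpace K] [CompactSpace K] [T2Space K]

variable (Λ : C(K,ℝ) →ₗ[ℝ] ℝ)

def tset (C : Set K) : Set ℝ :=
  {r | ∃ f : C(K,ℝ), (∀ x, 0 ≤ f x) ∧ (∀ x ∈ C, 1 ≤ f x) ∧ Λ f = r}

noncomputable def lam (C : Set K) : ℝ := sInf (tset Λ C)

lemma one_mem_tset (C : Set K) : Λ 1 ∈ tset Λ C :=
  ⟨1, fun _ => by norm_num, fun _ _ => by norm_num, rfl⟩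

variable {Λ}
variable (hpos : ∀ f : C(K,ℝ), (∀ x, 0 ≤ f x) → 0 ≤ Λ f)
include hpos

lemma lmono {f g : C(K,ℝ)} (h : ∀ x, f x ≤ g x) : Λ f ≤ Λ g := by
  have h1 := hpos (g - f) (fun x => by
    simp only [ContinuousMap.sub_apply]
    linarith [h x])
  have h2 : Λ (g - f) = Λ g - Λ f := by rw [map_sub]
  linarith

lemma tset_bddBelow (C : Set K) : BddBelow (tset Λ C) :=
  ⟨0, fun r hr => by obtain ⟨f, h0, _, rfl⟩ := hr; exact hpos f h0⟩

lemma lam_nonneg (C : Set K) : 0 ≤ lam Λ C :=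
  le_csInf ⟨Λ 1, one_mem_tset Λ C⟩ (fun r hr => by
    obtain ⟨f, h0, _, rfl⟩ := hr; exact hpos f h0)

lemma lam_le {C : Set K} {f : C(K,ℝ)} (h0 : ∀ x, 0 ≤ f x) (h1 : ∀ x ∈ C, 1 ≤ f x) :
    lam Λ C ≤ Λ f :=
  csInf_le (tset_bddBelow hpos C) ⟨f, h0, h1, rfl⟩

lemma le_lam {C : Set K} {r : ℝ}
    (h : ∀ f : C(K,ℝ), (∀ x, 0 ≤ f x) → (∀ x ∈ C, 1 ≤ f x) → r ≤ Λ f) :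
    r ≤ lam Λ C :=
  le_csInf ⟨Λ 1, one_mem_tset Λ C⟩ (fun s hs => by
    obtain ⟨f, h0, h1, rfl⟩ := hs; exact h f h0 h1)

lemma lam_mono {C D : Set K} (h : C ⊆ D) : lam Λ C ≤ lam Λ D :=
  le_lam hpos (fun f h0 h1 => lam_le hpos h0 (fun x hx => h1 x (h hx)))

lemma lam_union_le (C D : Set K) : lam Λ (C ∪ D) ≤ lam Λ C + lam Λ D := by
  refine le_of_forall_pos_le_add (fun ε hε => ?_)
  obtain ⟨r, ⟨f, hf0, hf1, rfl⟩, hr⟩ :=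
    exists_lt_of_csInf_lt ⟨Λ 1, one_mem_tset Λ C⟩
      (show lam Λ C < lam Λ C + ε/2 by linarith)
  obtain ⟨s, ⟨g, hg0, hg1, rfl⟩, hs⟩ :=
    exists_lt_of_csInf_lt ⟨Λ 1, one_mem_tset Λ D⟩
      (show lam Λ D < lam Λ D + ε/2 by linarith)
  have : lam Λ (C ∪ D) ≤ Λ (f + g) := by
    refine lam_le hpos (fun x => ?_) ?_
    · have := hf0 x; have := hg0 x
      simp only [ContinuousMap.add_apply]; linarith
    · rintro x (hx | hx)
      · have := hg0 x; have := hf1 x hx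
        simp only [ContinuousMap.add_apply]; linarith
      · have := hf0 x; have := hg1 x hx
        simp only [ContinuousMap.add_apply]; linarith
  rw [map_add] at this
  linarith

lemma lam_union_disjoint {C D : Set K} (hC : IsClosed C) (hD : IsClosed D)
    (hdisj : Disjoint C D) : lam Λ (C ∪ D) = lam Λ C + lam Λ D := by
  refine le_antisymm (lam_union_le hpos C D) ?_
  obtain ⟨g, hg0, hg1, hg01⟩ := exists_continuous_zero_one_of_isClosed hD hC hdisj.symm
  refine le_lam hpos (fun f hf0 hf1 => ?_)
  have key : Λ (f * g) + Λ (f * (1 - g)) = Λ f := by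
    rw [← map_add]
    congr 1
    ext x
    simp only [ContinuousMap.add_apply, ContinuousMap.mul_apply, ContinuousMap.sub_apply,
      ContinuousMap.one_apply]
    ring
  have h1 : lam Λ C ≤ Λ (f * g) := by
    refine lam_le hpos (fun x => mul_nonneg (hf0 x) (hg01 x).1) (fun x hx => ?_)
    simp only [ContinuousMap.mul_apply]
    rw [show g x = 1 from hg1 hx, mul_one]
    exact hf1 x (Or.inl hx)
  have h2 : lam Λ D ≤ Λ (f * (1 - g)) := by
    refine lam_le hpos (fun x => mul_nonneg (hf0 x) ?_) (fun x hx => ?_)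
    · simp only [ContinuousMap.sub_apply, ContinuousMap.one_apply]
      linarith [(hg01 x).2]
    · simp only [ContinuousMap.mul_apply, ContinuousMap.sub_apply, ContinuousMap.one_apply]
      rw [show g x = 0 from hg0 hx]
      simpa using hf1 x (Or.inr hx)
  linarith

/-- The Riesz content associated to a positive linear functional. -/
noncomputable def rContent : Content K where
  toFun C := ⟨lam Λ C, lam_nonneg hpos C⟩
  mono' C D h := by exact lam_mono hpos h
  sup_disjoint' C D hd hC hD := by
    ext
    exact lam_union_disjoint hpos hC hD hd
  sup_le' C D := by
    exact lam_union_le hpos C D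

lemma rContent_apply (C : TopologicalSpace.Compacts K) :
    rContent hpos C = ENNReal.ofReal (lam Λ (C : Set K)) := by
  simp only [rContent, MeasureTheory.Content.mk_apply]
  rw [ENNReal.ofReal, Real.toNNReal_of_nonneg (lam_nonneg hpos _)]
  rfl

lemma rContent_regular : MeasureTheory.Content.ContentRegular (rContent hpos) := by
  intro C
  refine le_antisymm (le_iInf₂ fun C' hC' => ?_) ?_
  · exact (rContent hpos).mono C C' (interior_subset.trans' hC')
  · refine ENNReal.le_of_forall_pos_le_add fun ε hε _ => ?_
    have hepos : (0:ℝ) < ε := hε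
    have hlt : lam Λ (C : Set K) < lam Λ (C : Set K) + ε/2 := by linarith
    obtain ⟨r, ⟨f, hf0, hf1, rfl⟩, hr⟩ :=
      exists_lt_of_csInf_lt ⟨Λ 1, one_mem_tset Λ (C : Set K)⟩ hlt
    set L := lam Λ (C : Set K) with hL
    have hLnn : 0 ≤ L := lam_nonneg hpos _
    set c : ℝ := (L + ε/2) / (L + ε) with hc
    have hc0 : 0 < c := div_pos (by linarith) (by linarith)
    have hc1 : c < 1 := (div_lt_one (by linarith)).mpr (by linarith)
    set C' : Set K := {x | c ≤ f x} with hC'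
    have hC'closed : IsClosed C' := isClosed_le continuous_const f.continuous
    have hC'compact : IsCompact C' := hC'closed.isCompact
    have hsub : (C : Set K) ⊆ interior C' := by
      refine subset_trans (fun x hx => ?_)
        (interior_maximal (fun x (hx : c < f x) => le_of_lt hx)
          (isOpen_lt continuous_const f.continuous))
      exact (show x ∈ {y | c < f y} from lt_of_lt_of_le hc1 (hf1 x hx))
    have hle : lam Λ C' ≤ L + ε := by
      have htest : lam Λ C' ≤ Λ (c⁻¹ • f) := by
        refine lam_le hpos (fun x => by
          simp only [ContinuousMap.smul_apply, smul_eq_mul]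
          have := hf0 x
          have := hc0
          positivity) (fun x hx => ?_)
        have hx' : c ≤ f x := hx
        simp only [ContinuousMap.smul_apply, smul_eq_mul]
        rw [show (1:ℝ) = c⁻¹ * c by field_simp]
        exact mul_le_mul_of_nonneg_left hx' (by positivity)
      rw [LinearMap.map_smul, smul_eq_mul] at htest
      have h2 : c⁻¹ * Λ f ≤ c⁻¹ * (L + ε/2) :=
        mul_le_mul_of_nonneg_left (le_of_lt hr) (by positivity)
      have hcinv : c⁻¹ * (L + ε/2) = L + ε := by
        rw [hc]
        field_simp
      linarith
    refine le_trans (iInf₂_le (⟨C', hC'compact⟩ : TopologicalSpace.Compacts K) hsub) ?_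
    rw [rContent_apply hpos, rContent_apply hpos]
    calc ENNReal.ofReal (lam Λ C') ≤ ENNReal.ofReal (L + ε) := ENNReal.ofReal_le_ofReal hle
      _ ≤ ENNReal.ofReal L + ENNReal.ofReal ε := ENNReal.ofReal_add_le
      _ = ENNReal.ofReal (lam Λ (C : Set K)) + ε := by
          rw [ENNReal.ofReal_coe_nnreal]

lemma lam_univ : lam Λ (Set.univ : Set K) = Λ 1 := by
  refine le_antisymm (lam_le hpos (fun x => by norm_num) (fun x _ => by norm_num)) ?_
  refine le_lam hpos (fun f h0 h1 => lmono hpos (fun x => ?_))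
  simpa using h1 x (Set.mem_univ x)

variable [MeasurableSpace K] [BorelSpace K]

/-- The Riesz measure associated to a positive linear functional. -/
noncomputable def rMeasure : Measure K := (rContent hpos).measure

lemma rMeasure_compacts {C : Set K} (hC : IsCompact C) :
    rMeasure hpos C = ENNReal.ofReal (lam Λ C) := by
  have h := MeasureTheory.Content.measure_eq_content_of_regular (rContent hpos)
    (rContent_regular hpos) ⟨C, hC⟩
  rw [rContent_apply hpos] at h
  exact h

lemma rMeasure_prob (hΛ1 : Λ 1 = 1) : IsProbabilityMeasure (rMeasure hpos) := by
  constructor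
  rw [rMeasure_compacts hpos isCompact_univ, lam_univ hpos, hΛ1]
  simp

lemma rMeasure_regular : (rMeasure hpos).Regular := by
  have : ((rContent hpos).measure).Regular := inferInstance
  exact this

omit hpos in
lemma sum_clamp (t : ℝ) (h0 : 0 ≤ t) (n : ℕ) :
    ∑ i ∈ Finset.range n, min 1 (max 0 (t - i)) = min t n := by
  induction n with
  | zero => simp [min_eq_right h0]
  | succ n ih =>
    rw [Finset.sum_range_succ, ih]
    have hn : (0:ℝ) ≤ n := Nat.cast_nonneg n
    push_cast
    rcases le_total t n with h | h
    · rw [min_eq_left h, max_eq_left (show t - (n:ℝ) ≤ 0 by linarith),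
        min_eq_right (show (0:ℝ) ≤ 1 by norm_num),
        min_eq_left (show t ≤ (n:ℝ) + 1 by linarith)]
      ring
    · rcases le_total t ((n:ℝ) + 1) with h2 | h2
      · rw [min_eq_right h, max_eq_right (show (0:ℝ) ≤ t - n by linarith),
          min_eq_right (show t - (n:ℝ) ≤ 1 by linarith),
          min_eq_left h2]
        ring
      · rw [min_eq_right h, max_eq_right (show (0:ℝ) ≤ t - n by linarith),
          min_eq_left (show (1:ℝ) ≤ t - n by linarith),
          min_eq_right h2]

lemma rMeasure_integral_aux (hΛ1 : Λ 1 = 1) (F : C(K,ℝ)) (hF : ∀ x, F x ∈ Set.Icc (0:ℝ) 1) :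
    ∫ x, F x ∂(rMeasure hpos) = Λ F := by
  set μ := rMeasure hpos with hμ
  haveI : IsProbabilityMeasure μ := rMeasure_prob hpos hΛ1
  -- the key estimate for each n
  have key : ∀ n : ℕ, 0 < n → |Λ F - ∫ x, F x ∂μ| ≤ (n:ℝ)⁻¹ := by
    intro n hn
    have hnR : (0:ℝ) < n := by exact_mod_cast hn
    -- the staircase functions
    set h : ℕ → C(K,ℝ) := fun i =>
      ⟨fun x => min 1 (max 0 ((n:ℝ) * F x - i)),
        continuous_const.min (continuous_const.max
          ((continuous_const.mul F.continuous).sub continuous_const))⟩ with hh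
    set C : ℕ → Set K := fun i => {x | (i:ℝ) ≤ (n:ℝ) * F x} with hC
    have hCclosed : ∀ i, IsClosed (C i) := fun i =>
      isClosed_le continuous_const (continuous_const.mul F.continuous)
    have hCcompact : ∀ i, IsCompact (C i) := fun i => (hCclosed i).isCompact
    have hCmono : ∀ i, C (i+1) ⊆ C i := fun i x hx => by
      have : ((i:ℝ)+1) ≤ (n:ℝ) * F x := by exact_mod_cast hx
      exact le_trans (by linarith) this
    set a : ℕ → ℝ := fun i => (μ (C i)).toReal with ha
    have hμfin : ∀ s : Set K, μ s ≠ ⊤ := fun s => measure_ne_top μ s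
    have ha_eq : ∀ i, a i = lam Λ (C i) := by
      intro i
      show (μ (C i)).toReal = _
      rw [hμ, rMeasure_compacts hpos (hCcompact i),
        ENNReal.toReal_ofReal (lam_nonneg hpos _)]
    have h01 : ∀ i x, 0 ≤ h i x ∧ h i x ≤ 1 := fun i x =>
      ⟨le_min (by norm_num) (le_max_left _ _), min_le_left _ _⟩
    have hone : ∀ i x, x ∈ C (i+1) → h i x = 1 := by
      intro i x hx
      have : ((i:ℝ)+1) ≤ (n:ℝ) * F x := by exact_mod_cast hx
      show min 1 (max 0 ((n:ℝ) * F x - i)) = 1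
      rw [min_eq_left]
      exact le_max_of_le_right (by linarith)
    have hzero : ∀ i x, x ∉ C i → h i x = 0 := by
      intro i x hx
      have : (n:ℝ) * F x < i := lt_of_not_ge hx
      show min 1 (max 0 ((n:ℝ) * F x - i)) = 0
      rw [max_eq_left (by linarith), min_eq_right (by norm_num)]
    -- Λ (h i) sandwich
    have hΛsand : ∀ i, a (i+1) ≤ Λ (h i) ∧ Λ (h i) ≤ a i := by
      intro i
      constructor
      · rw [ha_eq]
        exact le_trans (lam_le hpos (fun x => (h01 i x).1)
          (fun x hx => le_of_eq (hone i x hx).symm)) (le_refl _)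
      · rw [ha_eq]
        refine le_lam hpos (fun f h0 h1 => lmono hpos (fun x => ?_))
        by_cases hx : x ∈ C i
        · exact le_trans (h01 i x).2 (h1 x hx)
        · rw [hzero i x hx]; exact h0 x
    -- integral sandwich
    have hint : ∀ i, Integrable (fun x => h i x) μ :=
      fun i => (h i).continuous.integrable_of_hasCompactSupport
        (HasCompactSupport.of_compactSpace _)
    have hIsand : ∀ i, a (i+1) ≤ ∫ x, h i x ∂μ ∧ (∫ x, h i x ∂μ) ≤ a i := by
      intro i
      constructor
      · have hmono : ∀ x, (C (i+1)).indicator (fun _ => (1:ℝ)) x ≤ h i x := by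
          intro x
          by_cases hx : x ∈ C (i+1)
          · rw [Set.indicator_of_mem hx, hone i x hx]
          · rw [Set.indicator_of_notMem hx]; exact (h01 i x).1
        have hind : Integrable ((C (i+1)).indicator (fun _ => (1:ℝ))) μ :=
          (integrable_const (1:ℝ)).indicator (hCclosed (i+1)).measurableSet
        have := integral_mono hind (hint i) hmono
        rwa [integral_indicator_const (1:ℝ) (hCclosed (i+1)).measurableSet,
          smul_eq_mul, mul_one] at this
      · have hmono : ∀ x, h i x ≤ (C i).indicator (fun _ => (1:ℝ)) x := by
          intro x
          by_cases hx : x ∈ C i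
          · rw [Set.indicator_of_mem hx]; exact (h01 i x).2
          · rw [Set.indicator_of_notMem hx, hzero i x hx]
        have hind : Integrable ((C i).indicator (fun _ => (1:ℝ))) μ :=
          (integrable_const (1:ℝ)).indicator (hCclosed i).measurableSet
        have := integral_mono (hint i) hind hmono
        rwa [integral_indicator_const (1:ℝ) (hCclosed i).measurableSet,
          smul_eq_mul, mul_one] at this
    -- decomposition of F
    have hdecomp : F = (n:ℝ)⁻¹ • (∑ i ∈ Finset.range n, h i) := by
      ext x
      have hx0 : 0 ≤ (n:ℝ) * F x := mul_nonneg hnR.le (hF x).1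
      have hxn : (n:ℝ) * F x ≤ n := by
        have := (hF x).2
        nlinarith
      simp only [ContinuousMap.smul_apply, ContinuousMap.sum_apply, smul_eq_mul]
      have hsum : ∑ i ∈ Finset.range n, h i x
          = ∑ i ∈ Finset.range n, min 1 (max 0 ((n:ℝ) * F x - i)) :=
        Finset.sum_congr rfl (fun i _ => rfl)
      rw [hsum, sum_clamp ((n:ℝ) * F x) hx0 n, min_eq_left hxn]
      field_simp
    have hΛF : Λ F = (n:ℝ)⁻¹ * ∑ i ∈ Finset.range n, Λ (h i) := by
      conv_lhs => rw [hdecomp]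
      rw [LinearMap.map_smul, map_sum]
      simp [smul_eq_mul]
    have hIF : ∫ x, F x ∂μ = (n:ℝ)⁻¹ * ∑ i ∈ Finset.range n, ∫ x, h i x ∂μ := by
      conv_lhs => rw [hdecomp]
      simp only [ContinuousMap.smul_apply, ContinuousMap.sum_apply, smul_eq_mul]
      simp only [← smul_eq_mul]
      rw [integral_smul, integral_finset_sum _ (fun i _ => hint i)]
    have habs : |Λ F - ∫ x, F x ∂μ|
        ≤ (n:ℝ)⁻¹ * ∑ i ∈ Finset.range n, (a i - a (i+1)) := by
      rw [hΛF, hIF, ← mul_sub, ← Finset.sum_sub_distrib, abs_mul,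
        abs_of_nonneg (inv_nonneg.mpr hnR.le)]
      refine mul_le_mul_of_nonneg_left ?_ (inv_nonneg.mpr hnR.le)
      refine le_trans (Finset.abs_sum_le_sum_abs _ _) (Finset.sum_le_sum (fun i _ => ?_))
      have h1 := hΛsand i
      have h2 := hIsand i
      rw [abs_le]
      constructor
      · linarith [h1.1, h1.2, h2.1, h2.2]
      · linarith [h1.1, h1.2, h2.1, h2.2]
    have htel : ∑ i ∈ Finset.range n, (a i - a (i+1)) = a 0 - a n :=
      Finset.sum_range_sub' a n
    have ha0 : a 0 ≤ 1 := by
      show (μ (C 0)).toReal ≤ 1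
      have h1 : μ (C 0) ≤ μ Set.univ := measure_mono (Set.subset_univ _)
      have h2 : (μ (C 0)).toReal ≤ (μ Set.univ).toReal :=
        ENNReal.toReal_mono (measure_ne_top μ _) h1
      rwa [measure_univ, ENNReal.toReal_one] at h2
    have han : 0 ≤ a n := ENNReal.toReal_nonneg
    calc |Λ F - ∫ x, F x ∂μ| ≤ (n:ℝ)⁻¹ * (a 0 - a n) := by rw [← htel]; exact habs
      _ ≤ (n:ℝ)⁻¹ * 1 := mul_le_mul_of_nonneg_left (by linarith) (inv_nonneg.mpr hnR.le)
      _ = (n:ℝ)⁻¹ := mul_one _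
  -- conclude
  have hlim : Filter.Tendsto (fun n : ℕ => (n:ℝ)⁻¹) Filter.atTop (nhds 0) :=
    tendsto_inv_atTop_nhds_zero_nat
  have hle : |Λ F - ∫ x, F x ∂μ| ≤ 0 :=
    ge_of_tendsto hlim (Filter.eventually_atTop.mpr ⟨1, fun n hn => key n hn⟩)
  have heq : Λ F - ∫ x, F x ∂μ = 0 :=
    abs_eq_zero.mp (le_antisymm hle (abs_nonneg _))
  linarith

lemma rMeasure_integral (hΛ1 : Λ 1 = 1) (F : C(K,ℝ)) :
    ∫ x, F x ∂(rMeasure hpos) = Λ F := by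
  set μ := rMeasure hpos with hμ
  haveI : IsProbabilityMeasure μ := rMeasure_prob hpos hΛ1
  set c := ‖F‖ with hcdef
  have hc : 0 ≤ c := norm_nonneg F
  have hpos2 : (0:ℝ) < 2*c+1 := by linarith
  set G : C(K,ℝ) := (2*c+1)⁻¹ • (F + ContinuousMap.const K c) with hG
  have hGx : ∀ x, G x = (2*c+1)⁻¹ * (F x + c) := fun x => by
    rw [hG]
    simp only [ContinuousMap.smul_apply, ContinuousMap.add_apply, ContinuousMap.const_apply,
      smul_eq_mul]
  have hGicc : ∀ x, G x ∈ Set.Icc (0:ℝ) 1 := by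
    intro x
    have hb : |F x| ≤ c := F.norm_coe_le_norm x
    obtain ⟨hb1, hb2⟩ := abs_le.mp hb
    rw [hGx]
    constructor
    · have h1 : 0 ≤ F x + c := by linarith
      positivity
    · rw [← div_eq_inv_mul, div_le_one hpos2]
      linarith
  have hkey := rMeasure_integral_aux hpos hΛ1 G hGicc
  have hFi : Integrable (fun x => F x) μ :=
    F.continuous.integrable_of_hasCompactSupport (HasCompactSupport.of_compactSpace _)
  have hL : ∫ x, G x ∂μ = (2*c+1)⁻¹ * ((∫ x, F x ∂μ) + c) := by
    simp only [hGx]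
    simp only [← smul_eq_mul]
    rw [integral_smul, integral_add hFi (integrable_const c), integral_const]
    simp [measure_univ]
  have hR : Λ G = (2*c+1)⁻¹ * (Λ F + c) := by
    have hconst : ContinuousMap.const K c = c • (1:C(K,ℝ)) := by
      ext x
      simp
    rw [hG, LinearMap.map_smul, smul_eq_mul, map_add, hconst, LinearMap.map_smul, hΛ1]
    simp [smul_eq_mul]
  rw [hL, hR] at hkey
  have hne : (2*c+1)⁻¹ ≠ 0 := by positivity
  have := mul_left_cancel₀ hne hkey
  linarith

omit hpos

lemma cont_integrable {μ : Measure K} [IsFiniteMeasure μ] (F : C(K,ℝ)) :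
    Integrable (fun x => F x) μ :=
  F.continuous.integrable_of_hasCompactSupport (HasCompactSupport.of_compactSpace _)

lemma meas_le_of_integral (μ σ : Measure K) [IsProbabilityMeasure μ] [IsProbabilityMeasure σ]
    [σ.OuterRegular]
    (hall : ∀ F : C(K,ℝ), ∫ x, F x ∂μ = ∫ x, F x ∂σ)
    {C : Set K} (hC : IsCompact C) : μ C ≤ σ C := by
  rw [Set.measure_eq_iInf_isOpen C σ]
  refine le_iInf fun U => le_iInf fun hCU => le_iInf fun hU => ?_
  obtain ⟨f, hf0, hf1, hf01⟩ := exists_continuous_zero_one_of_isClosed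
    (hU.isClosed_compl) (hC.isClosed)
    (Set.disjoint_left.mpr fun x hxc hxC => hxc (hCU hxC))
  have hCmeas : MeasurableSet C := hC.isClosed.measurableSet
  have hUmeas : MeasurableSet U := hU.measurableSet
  have h1 : (μ C).toReal ≤ ∫ x, f x ∂μ := by
    have hmono : ∀ x, C.indicator (fun _ => (1:ℝ)) x ≤ f x := by
      intro x
      by_cases hx : x ∈ C
      · rw [Set.indicator_of_mem hx]
        exact le_of_eq (by simpa using (hf1 hx).symm)
      · rw [Set.indicator_of_notMem hx]; exact (hf01 x).1
    have := integral_mono ((integrable_const (1:ℝ)).indicator hCmeas)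
      (cont_integrable (μ := μ) f) hmono
    rwa [integral_indicator_const (1:ℝ) hCmeas, smul_eq_mul, mul_one] at this
  have h2 : ∫ x, f x ∂σ ≤ (σ U).toReal := by
    have hmono : ∀ x, f x ≤ U.indicator (fun _ => (1:ℝ)) x := by
      intro x
      by_cases hx : x ∈ U
      · rw [Set.indicator_of_mem hx]; exact (hf01 x).2
      · rw [Set.indicator_of_notMem hx]
        exact le_of_eq (by simpa using hf0 hx)
    have := integral_mono (cont_integrable (μ := σ) f)
      ((integrable_const (1:ℝ)).indicator hUmeas) hmono
    rwa [integral_indicator_const (1:ℝ) hUmeas, smul_eq_mul, mul_one] at this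
  have h3 : (μ C).toReal ≤ (σ U).toReal := by
    rw [hall f] at h1
    linarith
  exact (ENNReal.toReal_le_toReal (measure_ne_top μ C) (measure_ne_top σ U)).mp h3

lemma meas_unique (B : Subalgebra ℝ C(K,ℝ)) (hB : B.SeparatesPoints)
    (μ ν : Measure K) (hμp : IsProbabilityMeasure μ) (hμr : μ.Regular)
    (hνp : IsProbabilityMeasure ν) (hνr : ν.Regular)
    (hagree : ∀ g ∈ B, ∫ x, g x ∂μ = ∫ x, g x ∂ν) : μ = ν := by
  haveI := hμp; haveI := hνp; haveI := hμr; haveI := hνr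
  have hdense : Dense (B : Set C(K,ℝ)) := by
    have htop := ContinuousMap.subalgebra_topologicalClosure_eq_top_of_separatesPoints B hB
    rw [dense_iff_closure_eq]
    have : (B.topologicalClosure : Set C(K,ℝ)) = closure (B : Set C(K,ℝ)) := rfl
    rw [← this, htop]
    rfl
  have hall : ∀ F : C(K,ℝ), ∫ x, F x ∂μ = ∫ x, F x ∂ν := by
    intro F
    have key : ∀ ε : ℝ, 0 < ε → |(∫ x, F x ∂μ) - ∫ x, F x ∂ν| ≤ ε := by
      intro ε hε
      obtain ⟨g, hgmem⟩ := Metric.dense_iff.mp hdense F (ε/2) (by linarith)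
      have hgd : dist g F < ε/2 := Metric.mem_ball.mp hgmem.1
      have hgB : g ∈ B := hgmem.2
      have hbound : ∀ (ρ : Measure K), IsProbabilityMeasure ρ →
          |(∫ x, F x ∂ρ) - ∫ x, g x ∂ρ| ≤ ε/2 := by
        intro ρ hρ
        haveI := hρ
        rw [← integral_sub (cont_integrable F) (cont_integrable g)]
        have := norm_integral_le_of_norm_le_const (μ := ρ)
          (f := fun x => F x - g x) (C := ε/2) ?_
        · rwa [probReal_univ, mul_one, Real.norm_eq_abs] at this
        · refine Filter.Eventually.of_forall fun x => ?_
          have h1 : dist (F x) (g x) ≤ dist F g := ContinuousMap.dist_apply_le_dist x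
          have h2 : dist F g ≤ ε/2 := le_of_lt (by rwa [dist_comm] at hgd)
          rw [Real.norm_eq_abs, ← Real.dist_eq]
          linarith
      have hg := hagree g hgB
      have b1 := hbound μ hμp
      have b2 := hbound ν hνp
      rw [abs_le] at b1 b2 ⊢
      constructor
      · linarith [b1.1, b1.2, b2.1, b2.2]
      · linarith [b1.1, b1.2, b2.1, b2.2]
    have h0 : |(∫ x, F x ∂μ) - ∫ x, F x ∂ν| ≤ 0 := by
      by_contra hcon
      push_neg at hcon
      have := key (|(∫ x, F x ∂μ) - ∫ x, F x ∂ν| / 2) (by linarith)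
      linarith
    have := abs_nonneg ((∫ x, F x ∂μ) - ∫ x, F x ∂ν)
    have heq := abs_eq_zero.mp (le_antisymm h0 this)
    linarith
  have hcomp : ∀ {C : Set K}, IsCompact C → μ C = ν C := fun hC =>
    le_antisymm (meas_le_of_integral μ ν hall hC)
      (meas_le_of_integral ν μ (fun F => (hall F).symm) hC)
  have hopen : ∀ {U : Set K}, IsOpen U → μ U = ν U := by
    intro U hU
    rw [IsOpen.measure_eq_iSup_isCompact hU μ, IsOpen.measure_eq_iSup_isCompact hU ν]
    exact iSup_congr fun C => iSup_congr fun hCU => iSup_congr fun hC => hcomp hC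
  ext s hs
  rw [Set.measure_eq_iInf_isOpen s μ, Set.measure_eq_iInf_isOpen s ν]
  exact iInf_congr fun U => iInf_congr fun hsU => iInf_congr fun hU => hopen hU

end Stmt3Aux



/-- Let `A` be a subalgebra of the bounded continuous real functions on a
topological space `X` (hence containing constants) which separates the points of `X` and
separates points from closed sets, and let `I : A → ℝ` be linear with `I 1 = 1`,
`|I f| ≤ ‖f‖` (sup norm) and `I f ≥ 0` for `f ≥ 0`. Then there is a compactification
`(K, ι)` of `X` on which every `f ∈ A` has a unique continuous extension, together with a
unique regular Borel probability measure `μ` on `K` for which the integral of the extension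
of each `f ∈ A` equals `I f`. -/
theorem stmt_3 {X : Type u} [TopologicalSpace X]
    (A : Subalgebra ℝ (BoundedContinuousFunction X ℝ))
    (hsepPts : ∀ x y : X, x ≠ y → ∃ f ∈ A, f x ≠ f y)
    (hsepClosed : ∀ C : Set X, IsClosed C → ∀ x ∉ C,
      ∃ f ∈ A, f x = 1 ∧ ∀ y ∈ C, f y = 0)
    (I : A →ₗ[ℝ] ℝ)
    (hI1 : I 1 = 1)
    (hIbd : ∀ f : A, |I f| ≤ ‖(f : BoundedContinuousFunction X ℝ)‖)
    (hIpos : ∀ f : A, (∀ x, 0 ≤ (f : BoundedContinuousFunction X ℝ) x) → 0 ≤ I f) :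
    ∃ (K : Type u) (_ : TopologicalSpace K) (_ : CompactSpace K) (_ : T2Space K)
      (_ : MeasurableSpace K) (_ : BorelSpace K) (ι : X → K),
      Topology.IsEmbedding ι ∧ DenseRange ι ∧
      (∀ f ∈ A, ∃! F : K → ℝ, Continuous F ∧ ∀ x, F (ι x) = f x) ∧
      (∃! μ : Measure K,
        IsProbabilityMeasure μ ∧ μ.Regular ∧
          ∀ (f : A) (F : K → ℝ), Continuous F →
            (∀ x, F (ι x) = (f : BoundedContinuousFunction X ℝ) x) →
            ∫ z, F z ∂μ = I f) := by
  classical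
  rcases isEmpty_or_nonempty X with hX | hX
  · exfalso
    have h10 : (1 : A) = 0 := by
      apply Subtype.ext
      apply BoundedContinuousFunction.ext
      intro x
      exact (hX.false x).elim
    rw [h10, map_zero] at hI1
    exact one_ne_zero hI1.symm
  -- the ambient compact product space
  haveI : ∀ f : A, CompactSpace
      (Set.Icc (-‖(f : BoundedContinuousFunction X ℝ)‖) ‖(f : BoundedContinuousFunction X ℝ)‖) :=
    fun _ => isCompact_iff_compactSpace.mp isCompact_Icc
  set T : Type u := ∀ f : A,
    Set.Icc (-‖(f : BoundedContinuousFunction X ℝ)‖) ‖(f : BoundedContinuousFunction X ℝ)‖ with hT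
  have hmemIcc : ∀ (x : X) (f : A), (f : BoundedContinuousFunction X ℝ) x ∈
      Set.Icc (-‖(f : BoundedContinuousFunction X ℝ)‖) ‖(f : BoundedContinuousFunction X ℝ)‖ := by
    intro x f
    have h := BoundedContinuousFunction.norm_coe_le_norm (f : BoundedContinuousFunction X ℝ) x
    rw [Real.norm_eq_abs] at h
    exact Set.mem_Icc.mpr (abs_le.mp h)
  set E : X → T := fun x f => ⟨(f : BoundedContinuousFunction X ℝ) x, hmemIcc x f⟩ with hE
  have hEcont : Continuous E := continuous_pi fun f =>
    Continuous.subtype_mk (f : BoundedContinuousFunction X ℝ).continuous _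
  set Kset : Set T := closure (Set.range E) with hKset
  haveI : CompactSpace ↥Kset := isCompact_iff_compactSpace.mp isClosed_closure.isCompact
  letI mK : MeasurableSpace ↥Kset := borel _
  haveI bK : BorelSpace ↥Kset := ⟨rfl⟩
  set ι : X → ↥Kset := Set.codRestrict E Kset (fun x => subset_closure ⟨x, rfl⟩) with hι
  -- the embedding
  have hEind : IsInducing E := by
    rw [isInducing_iff_nhds]
    intro x
    refine le_antisymm ((hEcont.tendsto x).le_comap) ?_
    intro s hs
    obtain ⟨U, hUs, hUopen, hxU⟩ := mem_nhds_iff.mp hs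
    obtain ⟨f₀, hf₀A, hf₀x, hf₀C⟩ := hsepClosed Uᶜ hUopen.isClosed_compl x (by simpa using hxU)
    refine Filter.mem_comap.mpr ⟨{z : T | 1/2 < (z ⟨f₀, hf₀A⟩ : ℝ)}, ?_, ?_⟩
    · refine IsOpen.mem_nhds ?_ ?_
      · exact isOpen_lt continuous_const
          (continuous_subtype_val.comp (continuous_apply (⟨f₀, hf₀A⟩ : A)))
      · show (1:ℝ)/2 < f₀ x
        rw [hf₀x]
        norm_num
    · intro y hy
      apply hUs
      by_contra hyU
      have h0 : f₀ y = 0 := hf₀C y (by simpa using hyU)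
      have : (1:ℝ)/2 < f₀ y := hy
      rw [h0] at this
      norm_num at this
  have hEinj : Function.Injective E := by
    intro x y hxy
    by_contra hne
    obtain ⟨f, hfA, hfneq⟩ := hsepPts x y hne
    exact hfneq (congrArg Subtype.val (congrFun hxy ⟨f, hfA⟩))
  have hEemb : IsEmbedding E := ⟨hEind, hEinj⟩
  have hιemb : IsEmbedding ι := hEemb.codRestrict _ _
  have hιdense : DenseRange ι := by
    intro z
    rw [closure_subtype]
    have himg : Subtype.val '' Set.range ι = Set.range E := by
      ext t
      constructor
      · rintro ⟨w, ⟨x, rfl⟩, rfl⟩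
        exact ⟨x, rfl⟩
      · rintro ⟨x, rfl⟩
        exact ⟨ι x, ⟨x, rfl⟩, rfl⟩
    rw [himg]
    exact z.2
  -- continuous extensions
  set extF : A → C(↥Kset, ℝ) := fun f =>
    ⟨fun z => ((z : T) f : ℝ),
      continuous_subtype_val.comp ((continuous_apply f).comp continuous_subtype_val)⟩ with hextF
  have hextι : ∀ (f : A) (x : X), extF f (ι x) = (f : BoundedContinuousFunction X ℝ) x :=
    fun f x => rfl
  have hext_unique : ∀ (F G : ↥Kset → ℝ), Continuous F → Continuous G →
      (∀ x, F (ι x) = G (ι x)) → F = G := by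
    intro F G hF hG h
    refine Continuous.ext_on hιdense hF hG ?_
    rintro _ ⟨x, rfl⟩
    exact h x
  have hextCM : ∀ (F G : C(↥Kset,ℝ)), (∀ x, F (ι x) = G (ι x)) → F = G := fun F G h =>
    ContinuousMap.ext fun z =>
      congrFun (hext_unique F G F.continuous G.continuous h) z
  -- extensions as an algebra hom
  set eAlg : A →ₐ[ℝ] C(↥Kset, ℝ) :=
    { toFun := extF
      map_one' := hextCM _ _ (fun x => by simp [hextι])
      map_mul' := fun f g => hextCM _ _ (fun x => by simp [hextι])
      map_zero' := hextCM _ _ (fun x => by simp [hextι])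
      map_add' := fun f g => hextCM _ _ (fun x => by simp [hextι])
      commutes' := fun r => hextCM _ _ (fun x => by
        simp [hextι, Algebra.algebraMap_eq_smul_one]) } with heAlg
  -- norm identity
  have hnorm : ∀ f : A, ‖extF f‖ = ‖(f : BoundedContinuousFunction X ℝ)‖ := by
    intro f
    refine le_antisymm ?_ ?_
    · refine (ContinuousMap.norm_le _ (norm_nonneg _)).mpr (fun z => ?_)
      have hclosed : IsClosed {w : ↥Kset | ‖extF f w‖ ≤ ‖(f : BoundedContinuousFunction X ℝ)‖} :=
        isClosed_le ((extF f).continuous.norm) continuous_const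
      have hsub : Set.range ι ⊆
          {w : ↥Kset | ‖extF f w‖ ≤ ‖(f : BoundedContinuousFunction X ℝ)‖} := by
        rintro _ ⟨x, rfl⟩
        show ‖extF f (ι x)‖ ≤ _
        rw [hextι]
        exact BoundedContinuousFunction.norm_coe_le_norm _ x
      have huniv : Set.univ ⊆
          {w : ↥Kset | ‖extF f w‖ ≤ ‖(f : BoundedContinuousFunction X ℝ)‖} := by
        rw [← hιdense.closure_eq]
        exact closure_minimal hsub hclosed
      exact huniv (Set.mem_univ z)
    · refine (BoundedContinuousFunction.norm_le (norm_nonneg _)).mpr (fun x => ?_)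
      rw [← hextι f x]
      exact (extF f).norm_coe_le_norm (ι x)
  have hdistA : ∀ f g : A, dist f g = ‖((f - g : A) : BoundedContinuousFunction X ℝ)‖ := by
    intro f g
    rw [Subtype.dist_eq, dist_eq_norm]
    congr 1
  have hiso : Isometry extF := by
    refine Isometry.of_dist_eq (fun f g => ?_)
    rw [dist_eq_norm, hdistA]
    have hsub : extF f - extF g = extF (f - g) := (map_sub eAlg f g).symm
    rw [hsub, hnorm (f - g)]
  -- the image subalgebra separates points and is dense
  set Balg : Subalgebra ℝ C(↥Kset, ℝ) := eAlg.range with hBalg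
  have hBsep : Balg.SeparatesPoints := by
    intro z w hzw
    have hzw' : (z : T) ≠ (w : T) := fun h => hzw (Subtype.ext h)
    have hex : ∃ f : A, (z : T) f ≠ (w : T) f := by
      by_contra h
      push_neg at h
      exact hzw' (funext h)
    obtain ⟨f, hf⟩ := hex
    refine ⟨⇑(eAlg f), ⟨eAlg f, ⟨f, rfl⟩, rfl⟩, ?_⟩
    show extF f z ≠ extF f w
    exact fun h => hf (Subtype.ext h)
  have hedense : DenseRange extF := by
    have htop := ContinuousMap.subalgebra_topologicalClosure_eq_top_of_separatesPoints Balg hBsep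
    show Dense (Set.range extF)
    have hrange : Set.range extF = (Balg : Set C(↥Kset, ℝ)) := by
      ext g
      constructor
      · rintro ⟨f, rfl⟩
        exact ⟨f, rfl⟩
      · rintro ⟨f, rfl⟩
        exact ⟨f, rfl⟩
    rw [hrange, dense_iff_closure_eq]
    have hcl : (Balg.topologicalClosure : Set C(↥Kset,ℝ)) = closure (Balg : Set C(↥Kset,ℝ)) := rfl
    rw [← hcl, htop]
    rfl
  -- the extended functional, via uniform extension
  have hUI : IsUniformInducing extF := hiso.isUniformInducing
  have di : IsDenseInducing extF := hUI.isDenseInducing hedense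
  have hIuc : UniformContinuous (fun f : A => I f) := by
    refine LipschitzWith.uniformContinuous (K := 1) (LipschitzWith.of_dist_le_mul fun f g => ?_)
    rw [NNReal.coe_one, one_mul, Real.dist_eq, ← map_sub]
    exact le_trans (hIbd (f - g)) (le_of_eq (hdistA f g).symm)
  set Λfun : C(↥Kset,ℝ) → ℝ := di.extend (fun f => I f) with hΛfun
  have hΛe : ∀ f : A, Λfun (extF f) = I f := fun f => di.extend_eq hIuc.continuous f
  have hΛuc : UniformContinuous Λfun := uniformContinuous_uniformly_extend hUI hedense hIuc
  have hΛlip : ∀ F G : C(↥Kset,ℝ), dist (Λfun F) (Λfun G) ≤ dist F G := by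
    have hclosed : IsClosed {q : C(↥Kset,ℝ) × C(↥Kset,ℝ) |
        dist (Λfun q.1) (Λfun q.2) ≤ dist q.1 q.2} :=
      isClosed_le (Continuous.dist (hΛuc.continuous.comp continuous_fst)
        (hΛuc.continuous.comp continuous_snd)) continuous_dist
    intro F G
    refine DenseRange.induction_on₂ hedense hclosed (fun f g => ?_) F G
    rw [hΛe, hΛe, Real.dist_eq, ← map_sub]
    calc |I (f - g)| ≤ ‖((f - g : A) : BoundedContinuousFunction X ℝ)‖ := hIbd _
      _ = dist f g := (hdistA f g).symm
      _ = dist (extF f) (extF g) := (hiso.dist_eq f g).symm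
  have hadd : ∀ F G : C(↥Kset,ℝ), Λfun (F + G) = Λfun F + Λfun G := by
    have hclosed : IsClosed {q : C(↥Kset,ℝ) × C(↥Kset,ℝ) |
        Λfun (q.1 + q.2) = Λfun q.1 + Λfun q.2} :=
      isClosed_eq (hΛuc.continuous.comp (continuous_fst.add continuous_snd))
        ((hΛuc.continuous.comp continuous_fst).add (hΛuc.continuous.comp continuous_snd))
    intro F G
    refine DenseRange.induction_on₂ hedense hclosed (fun f g => ?_) F G
    rw [show extF f + extF g = extF (f + g) from (map_add eAlg f g).symm, hΛe, hΛe, hΛe,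
      map_add]
  have hsmul : ∀ (c : ℝ) (F : C(↥Kset,ℝ)), Λfun (c • F) = c * Λfun F := by
    intro c F
    have hclosed : IsClosed {G : C(↥Kset,ℝ) | Λfun (c • G) = c * Λfun G} :=
      isClosed_eq (hΛuc.continuous.comp (continuous_const_smul c))
        (continuous_const.mul hΛuc.continuous)
    refine DenseRange.induction_on hedense F hclosed (fun f => ?_)
    rw [show c • extF f = extF (c • f) from (map_smul eAlg c f).symm, hΛe, hΛe,
      LinearMap.map_smul, smul_eq_mul]
  set Λlin : C(↥Kset,ℝ) →ₗ[ℝ] ℝ :=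
    { toFun := Λfun
      map_add' := hadd
      map_smul' := fun c F => by simpa using hsmul c F } with hΛlin
  have hΛpos : ∀ F : C(↥Kset,ℝ), (∀ z, 0 ≤ F z) → 0 ≤ Λlin F := by
    intro F hF
    have key : ∀ ε : ℝ, 0 < ε → -(2*ε) ≤ Λfun F := by
      intro ε hε
      obtain ⟨f, hf⟩ := hedense.exists_dist_lt F hε
      have h1 : |Λfun F - I f| ≤ ε := by
        rw [← hΛe f, ← Real.dist_eq]
        exact le_trans (hΛlip F (extF f)) hf.le
      have h2 : -ε ≤ I f := by
        have hptwise : ∀ x : X, -ε ≤ (f : BoundedContinuousFunction X ℝ) x := by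
          intro x
          have hd : dist (F (ι x)) (extF f (ι x)) ≤ dist F (extF f) :=
            ContinuousMap.dist_apply_le_dist (ι x)
          have h3 : |F (ι x) - extF f (ι x)| < ε := by
            rw [← Real.dist_eq]
            exact lt_of_le_of_lt hd hf
          have h4 := (abs_lt.mp h3).2
          have h5 : extF f (ι x) = (f : BoundedContinuousFunction X ℝ) x := hextι f x
          have h6 := hF (ι x)
          rw [h5] at h4
          linarith
        have hg : 0 ≤ I (f + ε • 1) := by
          apply hIpos
          intro x
          have hcoe : ((f + ε • (1:A) : A) : BoundedContinuousFunction X ℝ) x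
              = (f : BoundedContinuousFunction X ℝ) x + ε := by
            push_cast
            simp
          rw [hcoe]
          linarith [hptwise x]
        rw [map_add] at hg
        rw [LinearMap.map_smul, hI1, smul_eq_mul, mul_one] at hg
        linarith
      have h7 := (abs_le.mp h1).1
      linarith
    show 0 ≤ Λfun F
    by_contra hneg
    push_neg at hneg
    have hεpos : 0 < -Λfun F / 4 := by linarith
    have := key _ hεpos
    linarith
  have hΛ1 : Λlin 1 = 1 := by
    have he1 : extF (1 : A) = 1 := map_one eAlg
    show Λfun 1 = 1
    rw [← he1, hΛe, hI1]
  -- the Riesz measure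
  set μ : Measure ↥Kset := Stmt3Aux.rMeasure hΛpos with hμ
  have hμprob : IsProbabilityMeasure μ := Stmt3Aux.rMeasure_prob hΛpos hΛ1
  have hμreg : μ.Regular := Stmt3Aux.rMeasure_regular hΛpos
  have hμint : ∀ F : C(↥Kset, ℝ), ∫ z, F z ∂μ = Λlin F := fun F =>
    Stmt3Aux.rMeasure_integral hΛpos hΛ1 F
  -- assembling everything
  refine ⟨↥Kset, inferInstance, inferInstance, inferInstance, mK, bK, ι, hιemb, hιdense, ?_, ?_⟩
  · intro f hf
    refine ⟨extF ⟨f, hf⟩, ⟨(extF ⟨f, hf⟩).continuous, fun x => rfl⟩, ?_⟩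
    rintro G ⟨hGc, hGι⟩
    exact hext_unique G (extF ⟨f, hf⟩) hGc (extF ⟨f, hf⟩).continuous
      (fun x => by rw [hGι x]; rfl)
  · refine ⟨μ, ⟨hμprob, hμreg, ?_⟩, ?_⟩
    · intro f F hFc hFι
      have hFe : (⟨F, hFc⟩ : C(↥Kset, ℝ)) = extF f :=
        hextCM ⟨F, hFc⟩ (extF f) (fun x => (hFι x).trans (hextι f x).symm)
      have hFfun : F = fun z => (extF f) z := by
        rw [← hFe]
        rfl
      rw [show (∫ z, F z ∂μ) = ∫ z, (extF f) z ∂μ by rw [← hFfun]]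
      rw [hμint (extF f)]
      exact hΛe f
    · rintro ν ⟨hνp, hνr, hνint⟩
      refine Stmt3Aux.meas_unique Balg hBsep ν μ hνp hνr hμprob hμreg ?_
      rintro g ⟨f, rfl⟩
      have hν := hνint f (⇑(eAlg f)) (eAlg f).continuous (fun x => hextι f x)
      have hμ' : ∫ z, (eAlg f) z ∂μ = I f := by
        have h := hμint (extF f)
        exact h.trans (hΛe f)
      show ∫ z, (eAlg f) z ∂ν = ∫ z, (eAlg f) z ∂μ
      rw [hν, hμ']
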